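/- If there exists an integer cyclically (2,d)-diagonal relative Heffter array H_{2d}(n;2d) with n ≥ 2d+4, then there exists an integer cyclically (2,d+2)-diagonal relative Heffter array H_{2d+4}(n;2d+4). -/

import Mathlib

/-- Number of filled cells in row `i` of the partially filled array `A`. -/
def rowFilled {m n : ℕ} (A : Fin m → Fin n → Option ℤ) (i : Fin m) : ℕ :=
  (Finset.univ.filter fun j => (A i j).isSome).card

/-- Number of filled cells in column `j` of the partially filled array `A`. -/
def colFilled {m n : ℕ} (A : Fin m → Fin n → Option ℤ) (j : Fin n) : ℕ :=
  (Finset.univ.filter fun i => (A i j).isSome).card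

/-- Sum of the entries of row `i` (empty cells count as `0`). -/
def rowSum {m n : ℕ} (A : Fin m → Fin n → Option ℤ) (i : Fin m) : ℤ :=
  ∑ j, (A i j).getD 0

/-- Sum of the entries of column `j` (empty cells count as `0`). -/
def colSum {m n : ℕ} (A : Fin m → Fin n → Option ℤ) (j : Fin n) : ℤ :=
  ∑ i, (A i j).getD 0

/-- `A` is a square integer relative Heffter array `H_t(n;k)`, written with
integer entries: each row and each column has exactly `k` filled cells, each
row and column sums to `0` in `ℤ`, every entry `x` satisfies
`1 ≤ |x| ≤ ⌊(2nk+t)/2⌋` with `|x|` not a multiple of `(2nk+t)/t` (i.e. the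
class of `x` avoids the subgroup `J` of order `t`), and for every admissible
absolute value exactly one cell contains it (up to sign), so that every class
of `ZMod (2nk+t) \ J` is represented exactly once up to sign. -/
def IsIntHeffter (n k t : ℕ) (A : Fin n → Fin n → Option ℤ) : Prop :=
  (∀ i, rowFilled A i = k) ∧
  (∀ j, colFilled A j = k) ∧
  (∀ i, rowSum A i = 0) ∧
  (∀ j, colSum A j = 0) ∧
  (∀ i j x, A i j = some x →
    1 ≤ x.natAbs ∧ x.natAbs ≤ (2 * n * k + t) / 2 ∧
      ¬ ((2 * n * k + t) / t ∣ x.natAbs)) ∧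
  (∀ x : ℕ, 1 ≤ x → x ≤ (2 * n * k + t) / 2 → ¬ ((2 * n * k + t) / t ∣ x) →
    ∃! p : Fin n × Fin n, A p.1 p.2 = some (x : ℤ) ∨ A p.1 p.2 = some (-(x : ℤ)))

/-- A square partially filled integer array is shiftable if every row and every
column contains as many positive entries as negative entries. -/
def Shiftable {n : ℕ} (A : Fin n → Fin n → Option ℤ) : Prop :=
  (∀ i : Fin n, (Finset.univ.filter fun j => 0 < (A i j).getD 0).card =
      (Finset.univ.filter fun j => (A i j).getD 0 < 0).card) ∧
  (∀ j : Fin n, (Finset.univ.filter fun i => 0 < (A i j).getD 0).card =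
      (Finset.univ.filter fun i => (A i j).getD 0 < 0).card)

/-- `A` is cyclically `k`-diagonal: its filled cells are exactly those of `k`
consecutive cyclic diagonals (cell `(r,c)` lies on diagonal `r - c (mod n)`). -/
def CycDiagonal {n : ℕ} (k : ℕ) (A : Fin n → Fin n → Option ℤ) : Prop :=
  ∃ d : ZMod n, ∀ r c : Fin n, (A r c).isSome ↔
    ∃ j : ℕ, j < k ∧ ((r : ℕ) : ZMod n) - ((c : ℕ) : ZMod n) = d + (j : ZMod n)

/-- `A` (of size `N` with `s ∣ N`) is cyclically `(s,k)`-diagonal: it is obtained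
from a cyclically `k`-diagonal `(N/s) × (N/s)` array by blowing up each cell into
an `s × s` block and then cyclically shifting the columns by some offset. -/
def CycSKDiagonal (s k : ℕ) {N : ℕ} (A : Fin N → Fin N → Option ℤ) : Prop :=
  s ∣ N ∧ ∃ (d : ZMod (N / s)) (off : ℕ), ∀ r c : Fin N, (A r c).isSome ↔
    ∃ j : ℕ, j < k ∧
      (((r : ℕ) / s : ℕ) : ZMod (N / s)) - (((((c : ℕ) + off) % N) / s : ℕ) : ZMod (N / s))
        = d + (j : ZMod (N / s))

/-- The support of a partially filled integer array: the set of absolute values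
of its entries. -/
def suppSet {m n : ℕ} (A : Fin m → Fin n → Option ℤ) : Set ℕ :=
  {a | ∃ i j x, A i j = some x ∧ x.natAbs = a}

/-- The entries of `A` have pairwise distinct absolute values. -/
def DistinctAbs {m n : ℕ} (A : Fin m → Fin n → Option ℤ) : Prop :=
  ∀ i j i' j' x y, A i j = some x → A i' j' = some y →
    x.natAbs = y.natAbs → (i, j) = (i', j')

/-- The skeleton of a partially filled array: the set of its filled positions. -/
def skel {m n : ℕ} (A : Fin m → Fin n → Option ℤ) : Set (Fin m × Fin n) :=
  {p | (A p.1 p.2).isSome}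

namespace HeffterAux14

lemma natCast_zmod_inj {m a b : ℕ} (ha : a < m) (hb : b < m)
    (h : (a : ZMod m) = (b : ZMod m)) : a = b := by
  have h2 := congrArg ZMod.val h
  rwa [ZMod.val_natCast_of_lt ha, ZMod.val_natCast_of_lt hb] at h2

def hval (M m j q i : ℕ) : ℕ := M + j * (4 * m + 1) + m * q + i + 1

def sval (M m j rr cc i : ℕ) : ℤ :=
  (if (rr + cc + j) % 2 = 0 then 1 else -1) * (hval M m j (2 * cc + rr) i : ℤ)

lemma sval_natAbs (M m j rr cc i : ℕ) :
    (sval M m j rr cc i).natAbs = hval M m j (2 * cc + rr) i := by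
  unfold sval; split <;> simp

lemma sval_eq_or (M m j rr cc i : ℕ) :
    sval M m j rr cc i = (hval M m j (2 * cc + rr) i : ℤ) ∨
      sval M m j rr cc i = -(hval M m j (2 * cc + rr) i : ℤ) := by
  unfold sval; split
  · left; ring
  · right; ring

lemma hval_inj {M m j q i j' q' i' : ℕ} (hi : i < m) (hi' : i' < m)
    (hj : j < 2) (hj' : j' < 2) (hq : q < 4) (hq' : q' < 4)
    (h : hval M m j q i = hval M m j' q' i') : j = j' ∧ q = q' ∧ i = i' := by
  unfold hval at h
  interval_cases j <;> interval_cases j' <;> interval_cases q <;> interval_cases q' <;> omega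

lemma hval_pos (M m j q i : ℕ) : 1 ≤ hval M m j q i := by unfold hval; omega

lemma hval_ge (M m j q i : ℕ) : M + 1 ≤ hval M m j q i := by unfold hval; omega

lemma hval_le {M m d j q i : ℕ} (hM : M = d * (4 * m + 1)) (hj : j < 2) (hq : q < 4)
    (hi : i < m) : hval M m j q i ≤ (d + 2) * (4 * m + 1) := by
  have h1 : j * (4 * m + 1) ≤ 1 * (4 * m + 1) := Nat.mul_le_mul_right _ (by omega)
  have h2 : m * q ≤ m * 3 := Nat.mul_le_mul_left _ (by omega)
  have h3 : (d + 2) * (4 * m + 1) = M + (8 * m + 2) := by rw [hM]; ring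
  unfold hval; omega

lemma hval_not_dvd {M m d j q i : ℕ} (hM : M = d * (4 * m + 1)) (hq : q < 4) (hi : i < m) :
    ¬ (4 * m + 1 ∣ hval M m j q i) := by
  intro h
  have he : hval M m j q i = (d + j) * (4 * m + 1) + (m * q + i + 1) := by
    unfold hval; rw [hM]; ring
  rw [he] at h
  have h1 : (4 * m + 1) ∣ (m * q + i + 1) :=
    (Nat.dvd_add_right (dvd_mul_left _ _)).mp h
  have h2 := Nat.le_of_dvd (by omega) h1
  have h3 : m * q ≤ m * 3 := Nat.mul_le_mul_left _ (by omega)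
  omega

lemma sval_row (M m rr i : ℕ) (hrr : rr < 2) :
    sval M m 0 rr 0 i + sval M m 0 rr 1 i + sval M m 1 rr 0 i + sval M m 1 rr 1 i = 0 := by
  unfold sval hval
  interval_cases rr <;> norm_num <;> ring

lemma sval_col (M m cc i1 i2 : ℕ) (hcc : cc < 2) :
    sval M m 0 0 cc i1 + sval M m 0 1 cc i1 + sval M m 1 0 cc i2 + sval M m 1 1 cc i2 = 0 := by
  unfold sval hval
  interval_cases cc <;> norm_num <;> ring

lemma hval_decomp {M m d x : ℕ} (hm : 0 < m) (hM : M = d * (4 * m + 1))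
    (hx1 : M < x) (hx2 : x ≤ (d + 2) * (4 * m + 1)) (hnd : ¬ (4 * m + 1 ∣ x)) :
    ∃ j q i, j < 2 ∧ q < 4 ∧ i < m ∧ x = hval M m j q i := by
  have hup : (d + 2) * (4 * m + 1) = M + (8 * m + 2) := by rw [hM]; ring
  have hne1 : x ≠ M + (4 * m + 1) := by
    intro h; exact hnd (h ▸ ⟨d + 1, by rw [hM]; ring⟩)
  have hne2 : x ≠ M + (8 * m + 2) := by
    intro h; exact hnd (h ▸ ⟨d + 2, by rw [hM]; ring⟩)
  by_cases hc : x ≤ M + 4 * m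
  · obtain ⟨q, i, hq4, him, hzqi⟩ : ∃ q i, q < 4 ∧ i < m ∧ x - M - 1 = m * q + i := by
      refine ⟨(x - M - 1) / m, (x - M - 1) % m, ?_, Nat.mod_lt _ hm, (Nat.div_add_mod _ m).symm⟩
      exact Nat.div_lt_of_lt_mul (by omega)
    refine ⟨0, q, i, by omega, hq4, him, ?_⟩
    have h1 : x = M + 0 * (4 * m + 1) + (x - M - 1) + 1 := by omega
    rw [hzqi] at h1
    unfold hval
    exact h1.trans (by ring)
  · obtain ⟨q, i, hq4, him, hzqi⟩ : ∃ q i, q < 4 ∧ i < m ∧ x - M - (4 * m + 1) - 1 = m * q + i := by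
      refine ⟨(x - M - (4 * m + 1) - 1) / m, (x - M - (4 * m + 1) - 1) % m, ?_,
        Nat.mod_lt _ hm, (Nat.div_add_mod _ m).symm⟩
      exact Nat.div_lt_of_lt_mul (by omega)
    refine ⟨1, q, i, by omega, hq4, him, ?_⟩
    have h1 : x = M + 1 * (4 * m + 1) + (x - M - (4 * m + 1) - 1) + 1 := by omega
    rw [hzqi] at h1
    unfold hval
    exact h1.trans (by ring)

lemma val_lt' {m : ℕ} (hm : 0 < m) (e : ZMod m) : ZMod.val e < m :=
  @ZMod.val_lt m ⟨hm.ne'⟩ e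

lemma filter_halfblock {n m : ℕ} (hm : 0 < m) (hn : n = 2 * m) (e : ZMod m) :
    (Finset.univ.filter fun r : Fin n => (((r : ℕ) / 2 : ℕ) : ZMod m) = e) =
      {⟨2 * ZMod.val e, by have := val_lt' hm e; omega⟩,
       ⟨2 * ZMod.val e + 1, by have := val_lt' hm e; omega⟩} := by
  haveI : NeZero m := ⟨hm.ne'⟩
  ext r
  simp only [Finset.mem_filter, Finset.mem_univ, true_and, Finset.mem_insert,
    Finset.mem_singleton]
  constructor
  · intro h
    have hrn : (r : ℕ) < 2 * m := hn ▸ r.isLt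
    have hlt : (r : ℕ) / 2 < m := by omega
    have hv := congrArg ZMod.val h
    rw [ZMod.val_natCast_of_lt hlt] at hv
    have hm2 := Nat.mod_two_eq_zero_or_one (r : ℕ)
    rcases hm2 with h2 | h2
    · left; apply Fin.ext; simp only; omega
    · right; apply Fin.ext; simp only; omega
  · intro h
    rcases h with h | h <;> rw [h] <;> simp only
    · have h2 : 2 * ZMod.val e / 2 = ZMod.val e := by omega
      rw [h2, ZMod.natCast_zmod_val]
    · have h2 : (2 * ZMod.val e + 1) / 2 = ZMod.val e := by omega
      rw [h2, ZMod.natCast_zmod_val]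

lemma halfblock_card {n m : ℕ} (hm : 0 < m) (hn : n = 2 * m) (e : ZMod m) :
    (Finset.univ.filter fun r : Fin n => (((r : ℕ) / 2 : ℕ) : ZMod m) = e).card = 2 := by
  rw [filter_halfblock hm hn e, Finset.card_insert_of_notMem (by simp [Fin.ext_iff]),
    Finset.card_singleton]

lemma halfblock_sum {n m : ℕ} (hm : 0 < m) (hn : n = 2 * m) (e : ZMod m) (F : Fin n → ℤ) :
    (∑ r : Fin n, if (((r : ℕ) / 2 : ℕ) : ZMod m) = e then F r else 0)
      = F ⟨2 * ZMod.val e, by have := val_lt' hm e; omega⟩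
        + F ⟨2 * ZMod.val e + 1, by have := val_lt' hm e; omega⟩ := by
  rw [← Finset.sum_filter, filter_halfblock hm hn e,
    Finset.sum_pair (by simp [Fin.ext_iff])]

lemma card_filter_comp_equiv {α : Type*} [Fintype α] [DecidableEq α] (σ : α ≃ α)
    (Q : α → Prop) [DecidablePred Q] :
    (Finset.univ.filter fun a => Q (σ a)).card = (Finset.univ.filter Q).card := by
  refine Finset.card_bij (fun a _ => σ a) ?_ ?_ ?_
  · intro a ha
    simp only [Finset.mem_filter, Finset.mem_univ, true_and] at ha ⊢; exact ha
  · intro a _ b _ h; exact σ.injective h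
  · intro b hb
    simp only [Finset.mem_filter, Finset.mem_univ, true_and] at hb
    exact ⟨σ.symm b, by simp [hb], by simp⟩

end HeffterAux14

open HeffterAux14 in
/-- an integer cyclically `(2,d)`-diagonal `H_{2d}(n;2d)` with
`n ≥ 2d+4` yields an integer cyclically `(2,d+2)`-diagonal `H_{2d+4}(n;2d+4)`. -/
theorem intHeffter_ext_2d_even (n d : ℕ) (hn : 2 * d + 4 ≤ n)
    (hex : ∃ A : Fin n → Fin n → Option ℤ,
      IsIntHeffter n (2 * d) (2 * d) A ∧ CycSKDiagonal 2 d A) :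
    ∃ A : Fin n → Fin n → Option ℤ,
      IsIntHeffter n (2 * d + 4) (2 * d + 4) A ∧ CycSKDiagonal 2 (d + 2) A := by
  classical
  obtain ⟨A, ⟨h1, h2, h3, h4, h5, h6⟩, hDiv, hDg⟩ := hex
  set m := n / 2 with hm
  obtain ⟨d0, off, hdiag⟩ := hDg
  have hnm : n = 2 * m := by omega
  have hm0 : 0 < m := by omega
  have hdm : d + 2 ≤ m := by omega
  haveI : NeZero n := ⟨by omega⟩
  haveI : NeZero m := ⟨hm0.ne'⟩
  set M := d * (4 * m + 1) with hM
  -- arithmetic normalizations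
  have holdb : (2 * n * (2 * d) + 2 * d) / 2 = M := by
    have h' : 2 * n * (2 * d) + 2 * d = M * 2 := by rw [hM, hnm]; ring
    rw [h', Nat.mul_div_cancel _ (by norm_num)]
  have holddvd : 0 < d → (2 * n * (2 * d) + 2 * d) / (2 * d) = 4 * m + 1 := by
    intro hd
    have h' : 2 * n * (2 * d) + 2 * d = (4 * m + 1) * (2 * d) := by rw [hnm]; ring
    rw [h', Nat.mul_div_cancel _ (by omega)]
  have hnewb : (2 * n * (2 * d + 4) + (2 * d + 4)) / 2 = (d + 2) * (4 * m + 1) := by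
    have h' : 2 * n * (2 * d + 4) + (2 * d + 4) = ((d + 2) * (4 * m + 1)) * 2 := by
      rw [hnm]; ring
    rw [h', Nat.mul_div_cancel _ (by norm_num)]
  have hnewdvd : (2 * n * (2 * d + 4) + (2 * d + 4)) / (2 * d + 4) = 4 * m + 1 := by
    have h' : 2 * n * (2 * d + 4) + (2 * d + 4) = (4 * m + 1) * (2 * d + 4) := by
      rw [hnm]; ring
    rw [h', Nat.mul_div_cancel _ (by omega)]
  have hOldEntry : ∀ r c x, A r c = some x →
      1 ≤ x.natAbs ∧ x.natAbs ≤ M ∧ ¬ (4 * m + 1 ∣ x.natAbs) := by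
    intro r c x hx
    obtain ⟨e1, e2, e3⟩ := h5 r c x hx
    rcases Nat.eq_zero_or_pos d with hd0 | hd0
    · subst hd0; simp at e2; omega
    · rw [holdb] at e2
      rw [holddvd hd0] at e3
      exact ⟨e1, e2, e3⟩
  -- the column-shift equivalence
  open Fin.NatCast in
  set σ : Equiv.Perm (Fin n) := Equiv.addRight (off : Fin n) with hσ
  open Fin.NatCast in
  have hσv : ∀ c : Fin n, ((σ c : Fin n) : ℕ) = ((c : ℕ) + off) % n := by
    intro c
    show ((c + (off : Fin n) : Fin n) : ℕ) = _
    rw [Fin.val_add, Fin.val_natCast, Nat.add_mod_mod]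
  -- diagonal conditions
  set cond : ℕ → Fin n → Fin n → Prop := fun j r c =>
    (((r : ℕ) / 2 : ℕ) : ZMod m) - (((((c : ℕ) + off) % n) / 2 : ℕ) : ZMod m)
      = d0 + (j : ZMod m) with hcond
  have hsub : ∀ a b e : ZMod m, a - b = e ↔ b = a - e := by
    intro a b e
    constructor
    · intro h; rw [← h, sub_sub_cancel]
    · intro h; rw [h, sub_sub_cancel]
  have hjinj : ∀ j1 j2 : ℕ, j1 < m → j2 < m →
      d0 + (j1 : ZMod m) = d0 + (j2 : ZMod m) → j1 = j2 := by
    intro j1 j2 hj1 hj2 h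
    exact natCast_zmod_inj hj1 hj2 (add_left_cancel h)
  have hnotboth : ∀ r c, cond d r c → cond (d + 1) r c → False := by
    intro r c u v
    have := hjinj d (d + 1) (by omega) (by omega) (u.symm.trans v)
    omega
  have hOldNew : ∀ r c j, cond j r c → d ≤ j → j < m → A r c = none := by
    intro r c j hc hdj hjm
    rcases hAv : A r c with _ | y
    · rfl
    · exfalso
      have hs : (A r c).isSome := by rw [hAv]; rfl
      obtain ⟨j', hj', hc'⟩ := (hdiag r c).mp hs
      have := hjinj j' j (by omega) hjm (hc'.symm.trans hc)
      omega
  -- the new array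
  set A' : Fin n → Fin n → Option ℤ := fun r c =>
    if cond d r c then
      some (sval M m 0 ((r : ℕ) % 2) ((((c : ℕ) + off) % n) % 2) ((r : ℕ) / 2))
    else if cond (d + 1) r c then
      some (sval M m 1 ((r : ℕ) % 2) ((((c : ℕ) + off) % n) % 2) ((r : ℕ) / 2))
    else A r c with hA'
  have hA'some : ∀ r c, (A' r c).isSome ↔
      (cond d r c ∨ cond (d + 1) r c ∨ (A r c).isSome) := by
    intro r c
    simp only [hA']
    split_ifs with hc1 hc2
    · exact iff_of_true rfl (Or.inl hc1)
    · exact iff_of_true rfl (Or.inr (Or.inl hc2))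
    · constructor
      · intro h; exact Or.inr (Or.inr h)
      · intro h
        rcases h with h | h | h
        · exact absurd h hc1
        · exact absurd h hc2
        · exact h
  have hcondiff : ∀ (j : ℕ) (r c : Fin n), cond j r c ↔
      ((((σ c : Fin n) : ℕ) / 2 : ℕ) : ZMod m)
        = (((r : ℕ) / 2 : ℕ) : ZMod m) - (d0 + (j : ZMod m)) := by
    intro j r c
    rw [hσv c]
    exact hsub _ _ _
  have hcondiffc : ∀ (j : ℕ) (r c : Fin n), cond j r c ↔
      (((r : ℕ) / 2 : ℕ) : ZMod m)
        = d0 + (j : ZMod m) + (((((c : ℕ) + off) % n) / 2 : ℕ) : ZMod m) := by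
    intro j r c
    exact sub_eq_iff_eq_add
  have hcntrow : ∀ (j : ℕ) (r : Fin n),
      (Finset.univ.filter fun c => cond j r c).card = 2 := by
    intro j r
    have he : (Finset.univ.filter fun c => cond j r c)
        = Finset.univ.filter fun c =>
            ((((σ c : Fin n) : ℕ) / 2 : ℕ) : ZMod m)
              = (((r : ℕ) / 2 : ℕ) : ZMod m) - (d0 + (j : ZMod m)) := by
      apply Finset.filter_congr
      intro c _
      exact hcondiff j r c
    rw [he]
    exact (card_filter_comp_equiv σ
      (fun c' : Fin n => (((c' : ℕ) / 2 : ℕ) : ZMod m)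
        = (((r : ℕ) / 2 : ℕ) : ZMod m) - (d0 + (j : ZMod m)))).trans
      (halfblock_card hm0 hnm _)
  have hcntcol : ∀ (j : ℕ) (c : Fin n),
      (Finset.univ.filter fun r => cond j r c).card = 2 := by
    intro j c
    have he : (Finset.univ.filter fun r => cond j r c)
        = Finset.univ.filter fun r : Fin n =>
            (((r : ℕ) / 2 : ℕ) : ZMod m)
              = d0 + (j : ZMod m) + (((((c : ℕ) + off) % n) / 2 : ℕ) : ZMod m) := by
      apply Finset.filter_congr
      intro r _
      exact hcondiffc j r c
    rw [he]
    exact halfblock_card hm0 hnm _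
  have hdisrow : ∀ r : Fin n,
      Disjoint (Finset.univ.filter fun c => cond d r c)
        (Finset.univ.filter fun c => cond (d + 1) r c ∨ (A r c).isSome) := by
    intro r
    rw [Finset.disjoint_left]
    intro c hc1 hc2
    simp only [Finset.mem_filter] at hc1 hc2
    rcases hc2.2 with h | h
    · exact hnotboth r c hc1.2 h
    · rw [hOldNew r c d hc1.2 le_rfl (by omega)] at h; simp at h
  have hdisrow2 : ∀ r : Fin n,
      Disjoint (Finset.univ.filter fun c => cond (d + 1) r c)
        (Finset.univ.filter fun c => (A r c).isSome) := by
    intro r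
    rw [Finset.disjoint_left]
    intro c hc1 hc2
    simp only [Finset.mem_filter] at hc1 hc2
    rw [hOldNew r c (d + 1) hc1.2 (by omega) (by omega)] at hc2
    simp at hc2
  have hdiscol : ∀ c : Fin n,
      Disjoint (Finset.univ.filter fun r => cond d r c)
        (Finset.univ.filter fun r => cond (d + 1) r c ∨ (A r c).isSome) := by
    intro c
    rw [Finset.disjoint_left]
    intro r hc1 hc2
    simp only [Finset.mem_filter] at hc1 hc2
    rcases hc2.2 with h | h
    · exact hnotboth r c hc1.2 h
    · rw [hOldNew r c d hc1.2 le_rfl (by omega)] at h; simp at h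
  have hdiscol2 : ∀ c : Fin n,
      Disjoint (Finset.univ.filter fun r => cond (d + 1) r c)
        (Finset.univ.filter fun r => (A r c).isSome) := by
    intro c
    rw [Finset.disjoint_left]
    intro r hc1 hc2
    simp only [Finset.mem_filter] at hc1 hc2
    rw [hOldNew r c (d + 1) hc1.2 (by omega) (by omega)] at hc2
    simp at hc2
  set g : Fin n → Fin n → ℤ := fun r c =>
    if cond d r c then sval M m 0 ((r : ℕ) % 2) ((((c : ℕ) + off) % n) % 2) ((r : ℕ) / 2)
    else if cond (d + 1) r c then
      sval M m 1 ((r : ℕ) % 2) ((((c : ℕ) + off) % n) % 2) ((r : ℕ) / 2)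
    else 0 with hg
  have hgetD : ∀ r c, (A' r c).getD 0 = (A r c).getD 0 + g r c := by
    intro r c
    simp only [hA', hg]
    split_ifs with hc1 hc2
    · rw [hOldNew r c d hc1 le_rfl (by omega)]; simp
    · rw [hOldNew r c (d + 1) hc2 (by omega) (by omega)]; simp
    · ring
  refine ⟨A', ⟨?_, ?_, ?_, ?_, ?_, ?_⟩, ?_⟩
  · intro r
    show (Finset.univ.filter fun c => (A' r c).isSome).card = 2 * d + 4
    have he : (Finset.univ.filter fun c => (A' r c).isSome)
        = Finset.univ.filter fun c =>
            (cond d r c ∨ (cond (d + 1) r c ∨ (A r c).isSome)) := by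
      apply Finset.filter_congr
      intro c _
      exact hA'some r c
    rw [he, Finset.filter_or, Finset.card_union_of_disjoint (hdisrow r),
      Finset.filter_or, Finset.card_union_of_disjoint (hdisrow2 r),
      hcntrow d r, hcntrow (d + 1) r]
    have := h1 r
    unfold rowFilled at this
    omega
  · intro c
    show (Finset.univ.filter fun r => (A' r c).isSome).card = 2 * d + 4
    have he : (Finset.univ.filter fun r => (A' r c).isSome)
        = Finset.univ.filter fun r =>
            (cond d r c ∨ (cond (d + 1) r c ∨ (A r c).isSome)) := by
      apply Finset.filter_congr
      intro r _
      exact hA'some r c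
    rw [he, Finset.filter_or, Finset.card_union_of_disjoint (hdiscol c),
      Finset.filter_or, Finset.card_union_of_disjoint (hdiscol2 c),
      hcntcol d c, hcntcol (d + 1) c]
    have := h2 c
    unfold colFilled at this
    omega
  · intro r
    show (∑ c, (A' r c).getD 0) = 0
    have hsplit : (∑ c, (A' r c).getD 0) = rowSum A r + ∑ c, g r c := by
      rw [rowSum, ← Finset.sum_add_distrib]
      exact Finset.sum_congr rfl fun c _ => hgetD r c
    rw [hsplit, h3 r, zero_add]
    have hee : (((r : ℕ) / 2 : ℕ) : ZMod m) - (d0 + (d : ZMod m))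
        ≠ (((r : ℕ) / 2 : ℕ) : ZMod m) - (d0 + ((d + 1 : ℕ) : ZMod m)) := by
      intro h
      have h2 := sub_right_inj.mp h
      have := hjinj d (d + 1) (by omega) (by omega) h2
      omega
    have hgG : ∀ c, g r c =
        (if ((((σ c : Fin n) : ℕ) / 2 : ℕ) : ZMod m)
            = (((r : ℕ) / 2 : ℕ) : ZMod m) - (d0 + (d : ZMod m)) then
          sval M m 0 ((r : ℕ) % 2) (((σ c : Fin n) : ℕ) % 2) ((r : ℕ) / 2) else 0)
        + (if ((((σ c : Fin n) : ℕ) / 2 : ℕ) : ZMod m)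
            = (((r : ℕ) / 2 : ℕ) : ZMod m) - (d0 + ((d + 1 : ℕ) : ZMod m)) then
          sval M m 1 ((r : ℕ) % 2) (((σ c : Fin n) : ℕ) % 2) ((r : ℕ) / 2) else 0) := by
      intro c
      simp only [hg]
      by_cases hc1 : cond d r c
      · have hq1 := (hcondiff d r c).mp hc1
        have hq2 : ¬ ((((σ c : Fin n) : ℕ) / 2 : ℕ) : ZMod m)
            = (((r : ℕ) / 2 : ℕ) : ZMod m) - (d0 + ((d + 1 : ℕ) : ZMod m)) := by
          intro h; exact hee (hq1.symm.trans h)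
        rw [if_pos hc1, if_pos hq1, if_neg hq2, hσv c, add_zero]
      · by_cases hc2 : cond (d + 1) r c
        · have hq2 := (hcondiff (d + 1) r c).mp hc2
          have hq1 : ¬ ((((σ c : Fin n) : ℕ) / 2 : ℕ) : ZMod m)
              = (((r : ℕ) / 2 : ℕ) : ZMod m) - (d0 + (d : ZMod m)) := by
            intro h; exact hc1 ((hcondiff d r c).mpr h)
          rw [if_neg hc1, if_pos hc2, if_pos hq2, if_neg hq1, hσv c, zero_add]
        · rw [if_neg hc1, if_neg hc2, if_neg (fun h => hc1 ((hcondiff d r c).mpr h)),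
            if_neg (fun h => hc2 ((hcondiff (d + 1) r c).mpr h)), add_zero]
    rw [Finset.sum_congr rfl fun c _ => hgG c]
    rw [Equiv.sum_comp σ (fun c' : Fin n =>
        (if (((c' : ℕ) / 2 : ℕ) : ZMod m)
            = (((r : ℕ) / 2 : ℕ) : ZMod m) - (d0 + (d : ZMod m)) then
          sval M m 0 ((r : ℕ) % 2) ((c' : ℕ) % 2) ((r : ℕ) / 2) else 0)
        + (if (((c' : ℕ) / 2 : ℕ) : ZMod m)
            = (((r : ℕ) / 2 : ℕ) : ZMod m) - (d0 + ((d + 1 : ℕ) : ZMod m)) then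
          sval M m 1 ((r : ℕ) % 2) ((c' : ℕ) % 2) ((r : ℕ) / 2) else 0))]
    rw [Finset.sum_add_distrib]
    rw [halfblock_sum hm0 hnm _ (fun c' : Fin n =>
        sval M m 0 ((r : ℕ) % 2) ((c' : ℕ) % 2) ((r : ℕ) / 2))]
    rw [halfblock_sum hm0 hnm _ (fun c' : Fin n =>
        sval M m 1 ((r : ℕ) % 2) ((c' : ℕ) % 2) ((r : ℕ) / 2))]
    simp only
    have a1 : ∀ k : ℕ, (2 * k) % 2 = 0 := fun k => by omega
    have a2 : ∀ k : ℕ, (2 * k + 1) % 2 = 1 := fun k => by omega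
    rw [a1, a2, a1, a2]
    have := sval_row M m ((r : ℕ) % 2) ((r : ℕ) / 2) (by omega)
    linarith
  · intro c
    show (∑ r, (A' r c).getD 0) = 0
    have hsplit : (∑ r, (A' r c).getD 0) = colSum A c + ∑ r, g r c := by
      rw [colSum, ← Finset.sum_add_distrib]
      exact Finset.sum_congr rfl fun r _ => hgetD r c
    rw [hsplit, h4 c, zero_add]
    have hee : d0 + (d : ZMod m) + (((((c : ℕ) + off) % n) / 2 : ℕ) : ZMod m)
        ≠ d0 + ((d + 1 : ℕ) : ZMod m) + (((((c : ℕ) + off) % n) / 2 : ℕ) : ZMod m) := by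
      intro h
      have h2 := add_right_cancel h
      have := hjinj d (d + 1) (by omega) (by omega) h2
      omega
    have hgH : ∀ r, g r c =
        (if (((r : ℕ) / 2 : ℕ) : ZMod m)
            = d0 + (d : ZMod m) + (((((c : ℕ) + off) % n) / 2 : ℕ) : ZMod m) then
          sval M m 0 ((r : ℕ) % 2) ((((c : ℕ) + off) % n) % 2) ((r : ℕ) / 2) else 0)
        + (if (((r : ℕ) / 2 : ℕ) : ZMod m)
            = d0 + ((d + 1 : ℕ) : ZMod m) + (((((c : ℕ) + off) % n) / 2 : ℕ) : ZMod m) then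
          sval M m 1 ((r : ℕ) % 2) ((((c : ℕ) + off) % n) % 2) ((r : ℕ) / 2) else 0) := by
      intro r
      simp only [hg]
      by_cases hc1 : cond d r c
      · have hq1 := (hcondiffc d r c).mp hc1
        have hq2 : ¬ (((r : ℕ) / 2 : ℕ) : ZMod m)
            = d0 + ((d + 1 : ℕ) : ZMod m) + (((((c : ℕ) + off) % n) / 2 : ℕ) : ZMod m) := by
          intro h; exact hee (hq1.symm.trans h)
        rw [if_pos hc1, if_pos hq1, if_neg hq2, add_zero]
      · by_cases hc2 : cond (d + 1) r c
        · have hq2 := (hcondiffc (d + 1) r c).mp hc2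
          have hq1 : ¬ (((r : ℕ) / 2 : ℕ) : ZMod m)
              = d0 + (d : ZMod m) + (((((c : ℕ) + off) % n) / 2 : ℕ) : ZMod m) := by
            intro h; exact hc1 ((hcondiffc d r c).mpr h)
          rw [if_neg hc1, if_pos hc2, if_pos hq2, if_neg hq1, zero_add]
        · rw [if_neg hc1, if_neg hc2, if_neg (fun h => hc1 ((hcondiffc d r c).mpr h)),
            if_neg (fun h => hc2 ((hcondiffc (d + 1) r c).mpr h)), add_zero]
    rw [Finset.sum_congr rfl fun r _ => hgH r]
    rw [Finset.sum_add_distrib]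
    rw [halfblock_sum hm0 hnm _ (fun r : Fin n =>
        sval M m 0 ((r : ℕ) % 2) ((((c : ℕ) + off) % n) % 2) ((r : ℕ) / 2))]
    rw [halfblock_sum hm0 hnm _ (fun r : Fin n =>
        sval M m 1 ((r : ℕ) % 2) ((((c : ℕ) + off) % n) % 2) ((r : ℕ) / 2))]
    simp only
    have a1 : ∀ k : ℕ, (2 * k) % 2 = 0 := fun k => by omega
    have a2 : ∀ k : ℕ, (2 * k + 1) % 2 = 1 := fun k => by omega
    have a3 : ∀ k : ℕ, (2 * k) / 2 = k := fun k => by omega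
    have a4 : ∀ k : ℕ, (2 * k + 1) / 2 = k := fun k => by omega
    rw [a1, a2, a1, a2, a3, a4, a3, a4]
    have := sval_col M m ((((c : ℕ) + off) % n) % 2)
      (ZMod.val (d0 + (d : ZMod m) + (((((c : ℕ) + off) % n) / 2 : ℕ) : ZMod m)))
      (ZMod.val (d0 + ((d + 1 : ℕ) : ZMod m) + (((((c : ℕ) + off) % n) / 2 : ℕ) : ZMod m)))
      (by omega)
    linarith
  · intro r c x hx
    rw [hnewb, hnewdvd]
    simp only [hA'] at hx
    have hMle : M ≤ (d + 2) * (4 * m + 1) := by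
      rw [hM]; exact Nat.mul_le_mul_right _ (by omega)
    split_ifs at hx with hc1 hc2
    · have hxv := (Option.some_inj.mp hx).symm
      subst hxv
      have hb3 : ((r : ℕ) / 2) < m := by have := r.isLt; omega
      refine ⟨?_, ?_, ?_⟩
      · rw [sval_natAbs]; exact hval_pos _ _ _ _ _
      · rw [sval_natAbs]; exact hval_le hM (by omega) (by omega) hb3
      · rw [sval_natAbs]; exact hval_not_dvd hM (by omega) hb3
    · have hxv := (Option.some_inj.mp hx).symm
      subst hxv
      have hb3 : ((r : ℕ) / 2) < m := by have := r.isLt; omega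
      refine ⟨?_, ?_, ?_⟩
      · rw [sval_natAbs]; exact hval_pos _ _ _ _ _
      · rw [sval_natAbs]; exact hval_le hM (by omega) (by omega) hb3
      · rw [sval_natAbs]; exact hval_not_dvd hM (by omega) hb3
    · obtain ⟨e1, e2, e3⟩ := hOldEntry r c x hx
      exact ⟨e1, by omega, e3⟩
  · intro x hx1 hx2 hx3
    rw [hnewb] at hx2
    rw [hnewdvd] at hx3
    have habs1 : ∀ v : ℤ,
        (some v = (some ((x : ℕ) : ℤ) : Option ℤ) ∨ some v = some (-((x : ℕ) : ℤ))) →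
          v.natAbs = x := by
      intro v hv
      rcases hv with h | h <;> rw [Option.some_inj.mp h] <;> simp
    by_cases hxM : x ≤ M
    · have hd1 : 0 < d := by
        rcases Nat.eq_zero_or_pos d with h | h
        · exfalso; rw [h] at hM; simp at hM; omega
        · exact h
      obtain ⟨p, hp, hpu⟩ := h6 x hx1 (by rw [holdb]; exact hxM)
        (by rw [holddvd hd1]; exact hx3)
      have hps : (A p.1 p.2).isSome := by rcases hp with h | h <;> rw [h] <;> rfl
      have hnc1 : ¬ cond d p.1 p.2 := by
        intro hcc
        rw [hOldNew _ _ d hcc le_rfl (by omega)] at hps; exact absurd hps (by simp)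
      have hnc2 : ¬ cond (d + 1) p.1 p.2 := by
        intro hcc
        rw [hOldNew _ _ (d + 1) hcc (by omega) (by omega)] at hps
        exact absurd hps (by simp)
      have hA'p : A' p.1 p.2 = A p.1 p.2 := by
        simp only [hA']; rw [if_neg hnc1, if_neg hnc2]
      refine ⟨p, ?_, ?_⟩
      · show A' p.1 p.2 = some ((x : ℕ) : ℤ) ∨ A' p.1 p.2 = some (-((x : ℕ) : ℤ))
        rw [hA'p]; exact hp
      · intro q hq
        simp only [hA'] at hq
        split_ifs at hq with hc1 hc2
        · exfalso
          have hv := habs1 _ hq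
          rw [sval_natAbs] at hv
          have := hval_ge M m 0 (2 * ((((q.2 : ℕ) + off) % n) % 2) + (q.1 : ℕ) % 2)
            ((q.1 : ℕ) / 2)
          omega
        · exfalso
          have hv := habs1 _ hq
          rw [sval_natAbs] at hv
          have := hval_ge M m 1 (2 * ((((q.2 : ℕ) + off) % n) % 2) + (q.1 : ℕ) % 2)
            ((q.1 : ℕ) / 2)
          omega
        · exact hpu q hq
    · obtain ⟨j, q, i, hj2, hq4, him, hxv⟩ := hval_decomp hm0 hM (by omega) hx2 hx3
      set e : ZMod m := (i : ZMod m) - (d0 + ((d + j : ℕ) : ZMod m)) with he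
      have hbcm : ZMod.val e < m := val_lt' hm0 e
      have hrlt : 2 * i + q % 2 < n := by omega
      have hclt : 2 * ZMod.val e + q / 2 < n := by omega
      set r : Fin n := ⟨2 * i + q % 2, hrlt⟩ with hrdef
      set c' : Fin n := ⟨2 * ZMod.val e + q / 2, hclt⟩ with hc'def
      set c : Fin n := σ.symm c' with hcdef
      have hσc : σ c = c' := by rw [hcdef]; exact σ.apply_symm_apply c'
      have hcoff : (((c : ℕ) + off) % n) = 2 * ZMod.val e + q / 2 := by
        rw [← hσv c, hσc]
      have hrv : (r : ℕ) = 2 * i + q % 2 := rfl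
      have hr2 : (r : ℕ) / 2 = i := by omega
      have hrm : (r : ℕ) % 2 = q % 2 := by omega
      have hc2 : (((c : ℕ) + off) % n) / 2 = ZMod.val e := by omega
      have hcm : (((c : ℕ) + off) % n) % 2 = q / 2 := by omega
      have hcondj : cond (d + j) r c := by
        show ((((r : ℕ) / 2 : ℕ)) : ZMod m)
            - (((((c : ℕ) + off) % n) / 2 : ℕ) : ZMod m) = d0 + ((d + j : ℕ) : ZMod m)
        rw [hr2, hc2, ZMod.natCast_zmod_val, he, sub_sub_cancel]
      have hq' : 2 * (q / 2) + q % 2 = q := by omega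
      have hvalx : A' r c = some (sval M m j ((r : ℕ) % 2)
          ((((c : ℕ) + off) % n) % 2) ((r : ℕ) / 2)) := by
        interval_cases j
        · simp only [Nat.add_zero] at hcondj
          simp only [hA']; rw [if_pos hcondj]
        · have hnc1 : ¬ cond d r c := fun hcc => hnotboth r c hcc hcondj
          simp only [hA']; rw [if_neg hnc1, if_pos hcondj]
      have habs : (sval M m j ((r : ℕ) % 2) ((((c : ℕ) + off) % n) % 2)
          ((r : ℕ) / 2)).natAbs = x := by
        rw [sval_natAbs, hrm, hcm, hr2, hq']
        exact hxv.symm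
      refine ⟨(r, c), ?_, ?_⟩
      · rcases sval_eq_or M m j ((r : ℕ) % 2) ((((c : ℕ) + off) % n) % 2)
            ((r : ℕ) / 2) with h | h
        · left
          show A' r c = some ((x : ℕ) : ℤ)
          rw [hvalx, h]
          congr 1
          rw [← habs, h]
          simp
        · right
          show A' r c = some (-((x : ℕ) : ℤ))
          rw [hvalx, h]
          congr 1
          rw [← habs, h]
          simp
      · intro p hp
        simp only [hA'] at hp
        have hplt : (p.1 : ℕ) < 2 * m := by have := p.1.isLt; omega
        have hpo : (((p.2 : ℕ) + off) % n) < 2 * m := by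
          have : (((p.2 : ℕ) + off) % n) < n := Nat.mod_lt _ (by omega)
          omega
        split_ifs at hp with hc1 hc2
        · -- branch j' = 0
          have hv := habs1 _ hp
          rw [sval_natAbs] at hv
          have hb' : (((((p.2 : ℕ) + off) % n) / 2 : ℕ) : ZMod m)
              = (((p.1 : ℕ) / 2 : ℕ) : ZMod m) - (d0 + ((d : ℕ) : ZMod m)) :=
            (hsub _ _ _).mp hc1
          generalize hww : (((p.2 : ℕ) + off) % n) = w at hv hb' hpo
          obtain ⟨hje, hqe, hie⟩ := hval_inj (by omega) him (by omega) hj2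
            (by omega) hq4 (hv.trans hxv)
          have hj0 : j = 0 := hje.symm
          subst hj0
          have hp1 : p.1 = r := by
            apply Fin.ext
            rw [hrv]
            omega
          rw [hie] at hb'
          have hb'' : ((w / 2 : ℕ) : ZMod m) = ((ZMod.val e : ℕ) : ZMod m) := by
            rw [ZMod.natCast_zmod_val, hb', he]
            norm_num
          have hwv : w / 2 = ZMod.val e := natCast_zmod_inj (by omega) hbcm hb''
          have hp2 : p.2 = c := by
            rw [hcdef]
            apply (Equiv.eq_symm_apply σ).mpr
            apply Fin.ext
            rw [hσv p.2, hww]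
            show w = 2 * ZMod.val e + q / 2
            omega
          rw [← hp1, ← hp2]
        · -- branch j' = 1
          have hv := habs1 _ hp
          rw [sval_natAbs] at hv
          have hb' : (((((p.2 : ℕ) + off) % n) / 2 : ℕ) : ZMod m)
              = (((p.1 : ℕ) / 2 : ℕ) : ZMod m) - (d0 + (((d + 1 : ℕ)) : ZMod m)) :=
            (hsub _ _ _).mp hc2
          generalize hww : (((p.2 : ℕ) + off) % n) = w at hv hb' hpo
          obtain ⟨hje, hqe, hie⟩ := hval_inj (by omega) him (by omega) hj2
            (by omega) hq4 (hv.trans hxv)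
          have hj1 : j = 1 := hje.symm
          subst hj1
          have hp1 : p.1 = r := by
            apply Fin.ext
            rw [hrv]
            omega
          rw [hie] at hb'
          have hb'' : ((w / 2 : ℕ) : ZMod m) = ((ZMod.val e : ℕ) : ZMod m) := by
            rw [ZMod.natCast_zmod_val, hb', he]
          have hwv : w / 2 = ZMod.val e := natCast_zmod_inj (by omega) hbcm hb''
          have hp2 : p.2 = c := by
            rw [hcdef]
            apply (Equiv.eq_symm_apply σ).mpr
            apply Fin.ext
            rw [hσv p.2, hww]
            show w = 2 * ZMod.val e + q / 2
            omega
          rw [← hp1, ← hp2]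
        · exfalso
          rcases hp with h | h
          · obtain ⟨_, e2, _⟩ := hOldEntry _ _ _ h
            rw [Int.natAbs_natCast] at e2; omega
          · obtain ⟨_, e2, _⟩ := hOldEntry _ _ _ h
            rw [Int.natAbs_neg, Int.natAbs_natCast] at e2; omega
  · refine ⟨⟨m, hnm⟩, d0, off, ?_⟩
    intro r c
    rw [hA'some r c]
    constructor
    · intro h
      rcases h with h | h | h
      · exact ⟨d, by omega, h⟩
      · exact ⟨d + 1, by omega, h⟩
      · obtain ⟨j, hj, hcj⟩ := (hdiag r c).mp h
        exact ⟨j, by omega, hcj⟩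
    · rintro ⟨j, hj, hcj⟩
      by_cases hjd : j < d
      · exact Or.inr (Or.inr ((hdiag r c).mpr ⟨j, hjd, hcj⟩))
      · rcases Nat.lt_or_ge j (d + 1) with h' | h'
        · have hjd' : j = d := by omega
          subst hjd'
          exact Or.inl hcj
        · have hjd' : j = d + 1 := by omega
          subst hjd'
          exact Or.inr (Or.inl hcj)
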